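/- Let 0 < ε ≤ 1, let ε̄ = ε/c1 with c1 ≥ 8·c0, and let 0 < ε̲ ≤ ε̄. Suppose cost(M_opt) ≤ 9·√d·n/ε. Let M be a matching of size i < n between A and B such that cost(M) ≤ (1 + ε/2)·cost(M_opt) and every alternating cycle Γ with respect to M satisfies adj_{ε̄,M}(Γ) ≥ 0. Then every augmenting path Π with respect to M with adj_{ε̲,M}(Π) ≤ adj*_{ε̄,M} satisfies ‖Π‖ ≤ 27·√d·n/ε. -/

import Mathlib

open scoped Classical
set_option linter.unusedSectionVars false
set_option linter.unusedVariables false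
set_option maxHeartbeats 1000000

noncomputable section

/-- Points in `d`-dimensional Euclidean space. -/
abbrev Pt (d : ℕ) : Type := EuclideanSpace ℝ (Fin d)

/-- `M` is a matching between `A` and `B`: every edge is a pair in `A × B`, and no point
appears in more than one edge. -/
def IsMatching {d : ℕ} (A B : Finset (Pt d)) (M : Finset (Pt d × Pt d)) : Prop :=
  (∀ e ∈ M, e.1 ∈ A ∧ e.2 ∈ B) ∧
  (∀ e ∈ M, ∀ e' ∈ M, e.1 = e'.1 → e = e') ∧
  (∀ e ∈ M, ∀ e' ∈ M, e.2 = e'.2 → e = e')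

/-- The cost of a matching: the sum of Euclidean lengths of its edges. -/
def matchCost {d : ℕ} (M : Finset (Pt d × Pt d)) : ℝ :=
  ∑ e ∈ M, dist e.1 e.2

/-- A point is free with respect to `M` if it lies in no edge of `M`. -/
def IsFree {d : ℕ} (M : Finset (Pt d × Pt d)) (p : Pt d) : Prop :=
  ∀ e ∈ M, e.1 ≠ p ∧ e.2 ≠ p

/-- The edge of the complete bipartite graph joining `u` and `v`, oriented as a pair in
`A × B`. -/
def edgeOf {d : ℕ} (A : Finset (Pt d)) (u v : Pt d) : Pt d × Pt d :=
  if u ∈ A then (u, v) else (v, u)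

/-- The edges of a path given by its list of vertices. -/
def pathEdges {d : ℕ} (A : Finset (Pt d)) (L : List (Pt d)) : List (Pt d × Pt d) :=
  (L.zip L.tail).map fun uv => edgeOf A uv.1 uv.2

/-- The edges of a cycle given by its list of vertices (including the wrap-around edge). -/
def cycleEdges {d : ℕ} (A : Finset (Pt d)) (L : List (Pt d)) : List (Pt d × Pt d) :=
  pathEdges A (L ++ L.take 1)

/-- Two consecutive edges alternate: exactly one of them is a matching edge. -/
def AltRel {d : ℕ} (M : Finset (Pt d × Pt d)) (e f : Pt d × Pt d) : Prop :=
  e ∈ M ↔ f ∉ M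

/-- An alternating path with respect to `M`: a simple path in the complete bipartite graph
on `A` and `B` whose edges alternate between edges of `M` and edges not in `M`. -/
def IsAltPath {d : ℕ} (A B : Finset (Pt d)) (M : Finset (Pt d × Pt d))
    (L : List (Pt d)) : Prop :=
  2 ≤ L.length ∧ L.Nodup ∧ (∀ p ∈ L, p ∈ A ∪ B) ∧
  L.Chain' (fun u v => (u ∈ A ∧ v ∈ B) ∨ (u ∈ B ∧ v ∈ A)) ∧
  (pathEdges A L).Chain' (AltRel M)

/-- An augmenting path: an alternating path whose two endpoints are free. -/
def IsAugPath {d : ℕ} (A B : Finset (Pt d)) (M : Finset (Pt d × Pt d))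
    (L : List (Pt d)) : Prop :=
  IsAltPath A B M L ∧
  (∀ p, L.head? = some p → IsFree M p) ∧
  (∀ p, L.getLast? = some p → IsFree M p)

/-- An alternating cycle with respect to `M`: a simple cycle in the complete bipartite
graph on `A` and `B` whose edges alternate between edges of `M` and edges not in `M`
(including around the wrap-around edge). -/
def IsAltCycle {d : ℕ} (A B : Finset (Pt d)) (M : Finset (Pt d × Pt d))
    (L : List (Pt d)) : Prop :=
  4 ≤ L.length ∧ L.Nodup ∧ (∀ p ∈ L, p ∈ A ∪ B) ∧
  (L ++ L.take 1).Chain' (fun u v => (u ∈ A ∧ v ∈ B) ∨ (u ∈ B ∧ v ∈ A)) ∧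
  (cycleEdges A L).Chain' (AltRel M) ∧
  (∀ e f, (cycleEdges A L).head? = some e → (cycleEdges A L).getLast? = some f →
    AltRel M f e)

/-- The Euclidean length `‖Π‖` of a path or cycle given by its list of edges. -/
def eucLen {d : ℕ} (E : List (Pt d × Pt d)) : ℝ :=
  (E.map fun e => dist e.1 e.2).sum

/-- The net cost of an alternating path or cycle given by its list of edges:
non-matching edges count positively, matching edges negatively. -/
def netCost {d : ℕ} (M : Finset (Pt d × Pt d)) (E : List (Pt d × Pt d)) : ℝ :=
  (E.map fun e => if e ∈ M then -(dist e.1 e.2) else dist e.1 e.2).sum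

/-- The `θ`-adjusted cost `adj_{θ,M}(Π) = netcost_M(Π) + c0·θ·‖Π‖`. -/
def adjCost {d : ℕ} (c0 θ : ℝ) (M : Finset (Pt d × Pt d))
    (E : List (Pt d × Pt d)) : ℝ :=
  netCost M E + c0 * θ * eucLen E

/-- The set of `θ`-adjusted costs of augmenting paths with respect to `M`;
`adj*_{θ,M}` is its least element. -/
def adjSet {d : ℕ} (c0 θ : ℝ) (A B : Finset (Pt d)) (M : Finset (Pt d × Pt d)) : Set ℝ :=
  {x | ∃ L : List (Pt d), IsAugPath A B M L ∧ adjCost c0 θ M (pathEdges A L) = x}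


section Aux

variable {d : ℕ} (M Mopt : Finset (Pt d × Pt d))

/-- Mopt-partner of `a` (junk off the support). -/
def tauF (a : Pt d) : Pt d :=
  if h : ∃ e, e ∈ Mopt ∧ e.1 = a then h.choose.2 else a

/-- M-partner (A-side) of a B-point, if matched. -/
def mpart (b : Pt d) : Option (Pt d) :=
  if h : ∃ e, e ∈ M ∧ e.2 = b then some h.choose.1 else none

def nxt (a : Pt d) : Option (Pt d) := mpart M (tauF Mopt a)

variable {A B : Finset (Pt d)} {M Mopt}

structure Good (A B : Finset (Pt d)) (M Mopt : Finset (Pt d × Pt d)) : Prop where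
  disj : Disjoint A B
  hM : IsMatching A B M
  hMopt : IsMatching A B Mopt
  cardBA : B.card = A.card
  optCard : Mopt.card = A.card

namespace Good

variable (G : Good A B M Mopt)
include G

theorem mem_mopt_tau {a : Pt d} (ha : a ∈ A) : (a, tauF Mopt a) ∈ Mopt := by
  have himg : Mopt.image Prod.fst = A := by
    apply Finset.eq_of_subset_of_card_le
    · intro x hx
      rcases Finset.mem_image.1 hx with ⟨e, he, rfl⟩
      exact (G.hMopt.1 e he).1
    · rw [Finset.card_image_of_injOn (fun e he e' he' h => G.hMopt.2.1 e he e' he' h),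
        G.optCard]
  have : a ∈ Mopt.image Prod.fst := himg ▸ ha
  rcases Finset.mem_image.1 this with ⟨e, he, hfst⟩
  have hex : ∃ e, e ∈ Mopt ∧ e.1 = a := ⟨e, he, hfst⟩
  rw [tauF, dif_pos hex]
  have h2 := hex.choose_spec
  have : hex.choose = (a, hex.choose.2) := by
    ext <;> simp [h2.2]
  rw [← this]; exact h2.1

theorem tau_eq {a b : Pt d} (h : (a, b) ∈ Mopt) : tauF Mopt a = b := by
  have ha : a ∈ A := (G.hMopt.1 _ h).1
  have h1 := G.mem_mopt_tau ha
  have := G.hMopt.2.1 _ h1 _ h rfl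
  exact (Prod.mk.injEq _ _ _ _ ▸ this).2

theorem tau_mem_B {a : Pt d} (ha : a ∈ A) : tauF Mopt a ∈ B :=
  (G.hMopt.1 _ (G.mem_mopt_tau ha)).2

theorem tau_injOn {a a' : Pt d} (ha : a ∈ A) (ha' : a' ∈ A)
    (h : tauF Mopt a = tauF Mopt a') : a = a' := by
  have h1 := G.mem_mopt_tau ha
  have h2 := G.mem_mopt_tau ha'
  rw [h] at h1
  have := G.hMopt.2.2 _ h1 _ h2 rfl
  exact (Prod.mk.injEq _ _ _ _ ▸ this).1

theorem tau_surj {b : Pt d} (hb : b ∈ B) : ∃ a ∈ A, tauF Mopt a = b := by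
  have himg : Mopt.image Prod.snd = B := by
    apply Finset.eq_of_subset_of_card_le
    · intro x hx
      rcases Finset.mem_image.1 hx with ⟨e, he, rfl⟩
      exact (G.hMopt.1 e he).2
    · rw [Finset.card_image_of_injOn (fun e he e' he' h => G.hMopt.2.2 e he e' he' h),
        G.optCard, G.cardBA]
  have : b ∈ Mopt.image Prod.snd := himg ▸ hb
  rcases Finset.mem_image.1 this with ⟨e, he, hsnd⟩
  refine ⟨e.1, (G.hMopt.1 e he).1, ?_⟩
  rw [← hsnd]
  exact G.tau_eq (by simpa using he)

theorem mpart_eq {a b : Pt d} (h : (a, b) ∈ M) : mpart M b = some a := by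
  have hex : ∃ e, e ∈ M ∧ e.2 = b := ⟨(a, b), h, rfl⟩
  rw [mpart, dif_pos hex]
  have h2 := hex.choose_spec
  have := G.hM.2.2 _ h2.1 (a, b) h h2.2
  simp [this]

theorem mem_of_mpart {a b : Pt d} (h : mpart M b = some a) : (a, b) ∈ M := by
  rw [mpart] at h
  split_ifs at h with hex
  · obtain ⟨h21, h22⟩ := hex.choose_spec
    have ha' : hex.choose.1 = a := Option.some_inj.1 h
    have : hex.choose = (a, b) := Prod.ext ha' h22
    rwa [this] at h21

theorem mem_M_iff_nxt {x u : Pt d} (hx : x ∈ A) :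
    (u, tauF Mopt x) ∈ M ↔ nxt M Mopt x = some u := by
  constructor
  · intro h; exact G.mpart_eq h
  · intro h; exact G.mem_of_mpart h

theorem nxt_mem_A {x u : Pt d} (h : nxt M Mopt x = some u) : u ∈ A :=
  (G.hM.1 _ (G.mem_of_mpart h)).1

theorem nxt_injOn {x y u : Pt d} (hx : x ∈ A) (hy : y ∈ A)
    (h1 : nxt M Mopt x = some u) (h2 : nxt M Mopt y = some u) : x = y := by
  have e1 := G.mem_of_mpart h1
  have e2 := G.mem_of_mpart h2
  have := G.hM.2.1 _ e1 _ e2 rfl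
  exact G.tau_injOn hx hy (Prod.mk.injEq _ _ _ _ ▸ this).2

/-- a free A-point is not in the image of `nxt`. -/
theorem free_not_image {a x : Pt d} (hfree : ¬∃ e ∈ M, e.1 = a) :
    nxt M Mopt x ≠ some a := by
  intro h
  exact hfree ⟨_, G.mem_of_mpart h, rfl⟩

end Good

section Chains

variable {d : ℕ} {A B : Finset (Pt d)} {M Mopt : Finset (Pt d × Pt d)}

/-- Iterates of `nxt`. -/
def iterO (M Mopt : Finset (Pt d × Pt d)) : ℕ → Pt d → Option (Pt d)
  | 0, a => some a
  | (j+1), a => (iterO M Mopt j a).bind (nxt M Mopt)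

/-- The chain starting at `a`, following `nxt`, with fuel `k`. -/
def chainList (M Mopt : Finset (Pt d × Pt d)) : ℕ → Pt d → List (Pt d)
  | 0, _a => [_a]
  | (k+1), a =>
    a :: (match nxt M Mopt a with
      | none => []
      | some a' => chainList M Mopt k a')

theorem chainList_succ_none {k : ℕ} {a : Pt d} (h : nxt M Mopt a = none) :
    chainList M Mopt (k+1) a = [a] := by
  simp [chainList, h]

theorem chainList_succ_some {k : ℕ} {a a' : Pt d} (h : nxt M Mopt a = some a') :
    chainList M Mopt (k+1) a = a :: chainList M Mopt k a' := by
  simp [chainList, h]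

theorem chainList_ne_nil {k : ℕ} {a : Pt d} : chainList M Mopt k a ≠ [] := by
  cases k with
  | zero => simp [chainList]
  | succ k => cases h : nxt M Mopt a with
    | none => simp [chainList_succ_none h]
    | some a' => simp [chainList_succ_some h]

theorem chainList_head {k : ℕ} {a : Pt d} :
    (chainList M Mopt k a).head chainList_ne_nil = a := by
  cases k with
  | zero => simp [chainList]
  | succ k => cases h : nxt M Mopt a with
    | none => simp [chainList_succ_none h]
    | some a' => simp [chainList_succ_some h]

theorem self_mem_chainList {k : ℕ} {a : Pt d} : a ∈ chainList M Mopt k a := by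
  have := List.head_mem (l := chainList M Mopt k a) chainList_ne_nil
  rwa [chainList_head] at this

theorem iterO_succ_left {j : ℕ} {a : Pt d} :
    iterO M Mopt (j+1) a = (nxt M Mopt a).bind (iterO M Mopt j) := by
  induction j generalizing a with
  | zero =>
    show (iterO M Mopt 0 a).bind _ = _
    show (some a).bind _ = _
    rw [Option.bind_some]
    cases nxt M Mopt a <;> simp [iterO]
  | succ j ih =>
    show (iterO M Mopt (j+1) a).bind _ = _
    rw [ih]
    cases nxt M Mopt a with
    | none => simp
    | some a' => simp [iterO]

theorem mem_chainList_iter {k : ℕ} {a x : Pt d} (h : x ∈ chainList M Mopt k a) :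
    ∃ j, iterO M Mopt j a = some x := by
  induction k generalizing a with
  | zero => simp [chainList] at h; exact ⟨0, by simp [iterO, h]⟩
  | succ k ih =>
    cases hn : nxt M Mopt a with
    | none =>
      rw [chainList_succ_none hn] at h
      simp at h; exact ⟨0, by simp [iterO, h]⟩
    | some a' =>
      rw [chainList_succ_some hn] at h
      rcases List.mem_cons.1 h with rfl | h
      · exact ⟨0, by simp [iterO]⟩
      · rcases ih h with ⟨j, hj⟩
        refine ⟨j + 1, ?_⟩
        rw [iterO_succ_left, hn, Option.bind_some]; exact hj

theorem chainList_chain' {k : ℕ} {a : Pt d} :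
    List.Chain' (fun x y => nxt M Mopt x = some y) (chainList M Mopt k a) := by
  induction k generalizing a with
  | zero => simp [chainList, List.Chain']
  | succ k ih =>
    cases hn : nxt M Mopt a with
    | none => simp [chainList_succ_none hn, List.Chain']
    | some a' =>
      rw [chainList_succ_some hn]
      refine List.isChain_cons.2 ⟨?_, ih⟩
      intro y hy
      rw [List.head?_eq_head chainList_ne_nil, chainList_head] at hy
      rw [hn, Option.some_inj.1 hy]

end Chains

section ChainsGood

variable {d : ℕ} {A B : Finset (Pt d)} {M Mopt : Finset (Pt d × Pt d)}

theorem getLast?_cons_ne {α : Type*} {l : List α} (a : α) (h : l ≠ []) :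
    (a :: l).getLast? = l.getLast? := by
  cases l with
  | nil => exact absurd rfl h
  | cons b t => exact List.getLast?_cons_cons

theorem chainList_getLast?_ne : ∀ {k : ℕ} {a : Pt d},
    (chainList M Mopt k a).getLast? ≠ none := by
  intro k a h
  rw [List.getLast?_eq_none_iff] at h
  exact chainList_ne_nil h

variable (G : Good A B M Mopt)
include G

theorem iterO_mem_A {j : ℕ} {a x : Pt d} (ha : a ∈ A) (h : iterO M Mopt j a = some x) :
    x ∈ A := by
  induction j generalizing x with
  | zero => simp [iterO] at h; rwa [← h]
  | succ j ih =>
    rw [show iterO M Mopt (j+1) a = (iterO M Mopt j a).bind (nxt M Mopt) from rfl] at h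
    cases hj : iterO M Mopt j a with
    | none => rw [hj] at h; simp at h
    | some y => rw [hj, Option.bind_some] at h; exact G.nxt_mem_A h

theorem chainList_subset_A {k : ℕ} {a x : Pt d} (ha : a ∈ A)
    (h : x ∈ chainList M Mopt k a) : x ∈ A := by
  rcases mem_chainList_iter h with ⟨j, hj⟩
  exact iterO_mem_A G ha hj

/-- "Never returns to start" property. -/
def NoRet (M Mopt : Finset (Pt d × Pt d)) (a : Pt d) : Prop :=
  ∀ j, 1 ≤ j → iterO M Mopt j a ≠ some a

theorem noRet_of_free {a : Pt d} (hfree : ¬∃ e ∈ M, e.1 = a) : NoRet M Mopt a := by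
  intro j hj h
  obtain ⟨j', rfl⟩ : ∃ j', j = j' + 1 := ⟨j - 1, (Nat.succ_pred_eq_of_pos hj).symm⟩
  rw [show iterO M Mopt (j'+1) a = (iterO M Mopt j' a).bind (nxt M Mopt) from rfl] at h
  cases hj' : iterO M Mopt j' a with
  | none => rw [hj'] at h; simp at h
  | some y => rw [hj', Option.bind_some] at h; exact G.free_not_image hfree h

theorem noRet_step {a a' : Pt d} (ha : a ∈ A) (hH : NoRet M Mopt a)
    (hn : nxt M Mopt a = some a') : NoRet M Mopt a' := by
  intro j hj h
  obtain ⟨j', rfl⟩ : ∃ j', j = j' + 1 := ⟨j - 1, (Nat.succ_pred_eq_of_pos hj).symm⟩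
  rw [show iterO M Mopt (j'+1) a' = (iterO M Mopt j' a').bind (nxt M Mopt) from rfl] at h
  cases hj' : iterO M Mopt j' a' with
  | none => rw [hj'] at h; simp at h
  | some y =>
    rw [hj', Option.bind_some] at h
    have hyA : y ∈ A := iterO_mem_A G (G.nxt_mem_A hn) hj'
    have hya : y = a := G.nxt_injOn hyA ha h hn
    subst hya
    apply hH (j' + 1) (by omega)
    rw [iterO_succ_left, hn, Option.bind_some]
    exact hj'

theorem chainList_nodup {k : ℕ} {a : Pt d} (ha : a ∈ A) (hH : NoRet M Mopt a) :
    (chainList M Mopt k a).Nodup := by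
  induction k generalizing a with
  | zero => simp [chainList]
  | succ k ih =>
    cases hn : nxt M Mopt a with
    | none => simp [chainList_succ_none hn]
    | some a' =>
      rw [chainList_succ_some hn]
      refine List.nodup_cons.2 ⟨?_, ih (G.nxt_mem_A hn) (noRet_step G ha hH hn)⟩
      intro hmem
      rcases mem_chainList_iter hmem with ⟨j, hj⟩
      apply hH (j + 1) (by omega)
      rw [iterO_succ_left, hn, Option.bind_some]
      exact hj

omit G in
theorem chainList_last_or_len {k : ℕ} {a z : Pt d}
    (hz : (chainList M Mopt k a).getLast? = some z) :
    nxt M Mopt z = none ∨ (chainList M Mopt k a).length = k + 1 := by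
  induction k generalizing a with
  | zero =>
    right; simp [chainList]
  | succ k ih =>
    cases hn : nxt M Mopt a with
    | none =>
      left
      rw [chainList_succ_none hn] at hz
      simp at hz
      rw [← hz]; exact hn
    | some a' =>
      have hc : chainList M Mopt (k+1) a = a :: chainList M Mopt k a' :=
        chainList_succ_some hn
      rw [hc, getLast?_cons_ne _ chainList_ne_nil] at hz
      rcases ih hz with h | h
      · exact Or.inl h
      · right
        rw [hc]
        simp [h]

theorem chainList_length_le {k : ℕ} {a : Pt d} (ha : a ∈ A) (hH : NoRet M Mopt a) :
    (chainList M Mopt k a).length ≤ A.card := by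
  classical
  have hnd := chainList_nodup G (k := k) ha hH
  have hsub : (chainList M Mopt k a).toFinset ⊆ A := by
    intro x hx
    exact chainList_subset_A G ha (List.mem_toFinset.1 hx)
  calc (chainList M Mopt k a).length = (chainList M Mopt k a).toFinset.card := by
        rw [List.toFinset_card_of_nodup hnd]
    _ ≤ A.card := Finset.card_le_card hsub

/-- With enough fuel, the chain ends at a point with no successor. -/
theorem chainList_last_none {a z : Pt d} (ha : a ∈ A) (hH : NoRet M Mopt a)
    (hz : (chainList M Mopt A.card a).getLast? = some z) :
    nxt M Mopt z = none := by
  rcases chainList_last_or_len hz with h | h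
  · exact h
  · exfalso
    have := chainList_length_le G (k := A.card) ha hH
    omega

omit G in
theorem chainList_pred {k : ℕ} {a u : Pt d} (h : u ∈ chainList M Mopt k a) :
    u = a ∨ ∃ x ∈ chainList M Mopt k a, nxt M Mopt x = some u := by
  induction k generalizing a with
  | zero => simp [chainList] at h; exact Or.inl h
  | succ k ih =>
    cases hn : nxt M Mopt a with
    | none =>
      rw [chainList_succ_none hn] at h
      simp at h; exact Or.inl h
    | some a' =>
      rw [chainList_succ_some hn] at h
      rcases List.mem_cons.1 h with rfl | h
      · exact Or.inl rfl
      · rcases ih h with rfl | ⟨x, hx, hxu⟩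
        · exact Or.inr ⟨a, by rw [chainList_succ_some hn]; simp, hn⟩
        · exact Or.inr ⟨x, by rw [chainList_succ_some hn]; simp [hx], hxu⟩

omit G in
theorem chainList_succ_mem {k : ℕ} {a x : Pt d} (h : x ∈ chainList M Mopt k a)
    (hlast : ∀ z, (chainList M Mopt k a).getLast? = some z → nxt M Mopt z = none) :
    nxt M Mopt x = none ∨ ∃ v ∈ chainList M Mopt k a, nxt M Mopt x = some v := by
  induction k generalizing a with
  | zero =>
    simp [chainList] at h hlast
    subst h; exact Or.inl hlast
  | succ k ih =>
    cases hn : nxt M Mopt a with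
    | none =>
      rw [chainList_succ_none hn] at h
      simp at h; subst h; exact Or.inl hn
    | some a' =>
      have hc : chainList M Mopt (k+1) a = a :: chainList M Mopt k a' :=
        chainList_succ_some hn
      rw [hc] at h ⊢
      rw [hc, getLast?_cons_ne _ chainList_ne_nil] at hlast
      rcases List.mem_cons.1 h with rfl | h
      · exact Or.inr ⟨a', by simp [self_mem_chainList], hn⟩
      · rcases ih h hlast with h' | ⟨v, hv, hxv⟩
        · exact Or.inl h'
        · exact Or.inr ⟨v, by simp [hv], hxv⟩

end ChainsGood

section IVL

variable {d : ℕ} {A B : Finset (Pt d)} {M Mopt : Finset (Pt d × Pt d)}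

/-- The interleaved vertex list `[a₀, τ a₀, a₁, τ a₁, ...]`. -/
def ivl (Mopt : Finset (Pt d × Pt d)) : List (Pt d) → List (Pt d)
  | [] => []
  | a :: r => a :: tauF Mopt a :: ivl Mopt r

/-- `mdist x` : length of the matching edge at `τ x`, if any. -/
def mdist (M Mopt : Finset (Pt d × Pt d)) (x : Pt d) : ℝ :=
  match nxt M Mopt x with
  | some u => dist u (tauF Mopt x)
  | none => 0

theorem mdist_none {x : Pt d} (h : nxt M Mopt x = none) : mdist M Mopt x = 0 := by
  simp [mdist, h]

theorem mdist_some {x u : Pt d} (h : nxt M Mopt x = some u) :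
    mdist M Mopt x = dist u (tauF Mopt x) := by
  simp [mdist, h]

theorem ivl_ne_nil {as : List (Pt d)} (h : as ≠ []) : ivl Mopt as ≠ [] := by
  cases as with
  | nil => exact absurd rfl h
  | cons a r => simp [ivl]

theorem mem_ivl {x : Pt d} {as : List (Pt d)} :
    x ∈ ivl Mopt as ↔ (x ∈ as ∨ ∃ a ∈ as, x = tauF Mopt a) := by
  induction as with
  | nil => simp [ivl]
  | cons a r ih =>
    simp only [ivl, List.mem_cons, ih]
    constructor
    · rintro (rfl | rfl | h | ⟨b, hb, rfl⟩)
      · exact Or.inl (Or.inl rfl)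
      · exact Or.inr ⟨a, Or.inl rfl, rfl⟩
      · exact Or.inl (Or.inr h)
      · exact Or.inr ⟨b, Or.inr hb, rfl⟩
    · rintro ((rfl | h) | ⟨b, hb, rfl⟩)
      · exact Or.inl rfl
      · exact Or.inr (Or.inr (Or.inl h))
      · rcases hb with rfl | hb
        · exact Or.inr (Or.inl rfl)
        · exact Or.inr (Or.inr (Or.inr ⟨b, hb, rfl⟩))

theorem pathEdges_cons {x y : Pt d} {l : List (Pt d)} :
    pathEdges A (x :: y :: l) = edgeOf A x y :: pathEdges A (y :: l) := by
  simp [pathEdges]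

theorem pathEdges_pair {x y : Pt d} : pathEdges A [x, y] = [edgeOf A x y] := by
  simp [pathEdges]

theorem pathEdges_append_singleton {l : List (Pt d)} {x z : Pt d}
    (h : l.getLast? = some z) :
    pathEdges A (l ++ [x]) = pathEdges A l ++ [edgeOf A z x] := by
  induction l with
  | nil => simp at h
  | cons a r ih =>
    cases r with
    | nil =>
      simp at h
      subst h
      simp [pathEdges_pair, pathEdges]
    | cons b t =>
      rw [List.getLast?_cons_cons] at h
      have h1 : (a :: b :: t) ++ [x] = a :: ((b :: t) ++ [x]) := by simp
      rw [h1]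
      have h2 : (b :: t) ++ [x] = b :: (t ++ [x]) := by simp
      rw [h2, pathEdges_cons, ← h2, ih h, pathEdges_cons]
      simp

theorem ivl_getLast {as : List (Pt d)} :
    (ivl Mopt as).getLast? = as.getLast?.map (fun z => tauF Mopt z) := by
  induction as with
  | nil => simp [ivl]
  | cons a r ih =>
    cases r with
    | nil => simp [ivl]
    | cons b t =>
      show (a :: tauF Mopt a :: ivl Mopt (b :: t)).getLast? = _
      rw [getLast?_cons_ne _ (by simp [ivl]), getLast?_cons_ne _ (ivl_ne_nil (by simp)), ih,
        List.getLast?_cons_cons]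

theorem edgeOf_mem {u v : Pt d} (hu : u ∈ A) : edgeOf A u v = (u, v) := by
  simp [edgeOf, hu]

theorem edgeOf_not_mem {u v : Pt d} (hu : u ∉ A) : edgeOf A u v = (v, u) := by
  simp [edgeOf, hu]

theorem netCost_cons {e : Pt d × Pt d} {E : List (Pt d × Pt d)} :
    netCost M (e :: E) = (if e ∈ M then -(dist e.1 e.2) else dist e.1 e.2) + netCost M E := by
  simp [netCost]

theorem eucLen_cons {e : Pt d × Pt d} {E : List (Pt d × Pt d)} :
    eucLen (e :: E) = dist e.1 e.2 + eucLen E := by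
  simp [eucLen]

theorem netCost_append {E1 E2 : List (Pt d × Pt d)} :
    netCost M (E1 ++ E2) = netCost M E1 + netCost M E2 := by
  simp [netCost]

theorem eucLen_append {E1 E2 : List (Pt d × Pt d)} :
    eucLen (E1 ++ E2) = eucLen E1 + eucLen E2 := by
  simp [eucLen]

theorem eucLen_nonneg {E : List (Pt d × Pt d)} : 0 ≤ eucLen E := by
  apply List.sum_nonneg
  intro x hx
  rcases List.mem_map.1 hx with ⟨e, _, rfl⟩
  exact dist_nonneg

end IVL

section IVLGood

variable {d : ℕ} {A B : Finset (Pt d)} {M Mopt : Finset (Pt d × Pt d)}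

theorem altRel_ff {e f : Pt d × Pt d} (h1 : e ∉ M) (h2 : f ∈ M) : AltRel M e f :=
  iff_of_false h1 (not_not_intro h2)

theorem altRel_tt {e f : Pt d × Pt d} (h1 : e ∈ M) (h2 : f ∉ M) : AltRel M e f :=
  iff_of_true h1 h2

variable (G : Good A B M Mopt)
include G

theorem tau_not_mem_A {a : Pt d} (ha : a ∈ A) : tauF Mopt a ∉ A := fun h =>
  Finset.disjoint_left.1 G.disj h (G.tau_mem_B ha)

theorem tau_ne_self {a : Pt d} (ha : a ∈ A) : a ≠ tauF Mopt a := fun h =>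
  tau_not_mem_A G ha (h ▸ ha)

theorem mopt_edge_notin_M {a : Pt d} (ha : a ∈ A) (h : nxt M Mopt a ≠ some a) :
    (a, tauF Mopt a) ∉ M := fun hmem => h ((G.mem_M_iff_nxt ha).1 hmem)

/-- Net cost and Euclidean length of the edges of an interleaved list. -/
theorem pe_net_len (as : List (Pt d)) (hne : as ≠ []) (hsub : ∀ x ∈ as, x ∈ A)
    (hch : List.Chain' (fun x y => nxt M Mopt x = some y) as) (hnd : as.Nodup)
    (hlast' : ∀ z, as.getLast? = some z → nxt M Mopt z ≠ some z) :
    netCost M (pathEdges A (ivl Mopt as)) =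
      (as.map fun x => dist x (tauF Mopt x)).sum - (as.dropLast.map (mdist M Mopt)).sum
    ∧ eucLen (pathEdges A (ivl Mopt as)) =
      (as.map fun x => dist x (tauF Mopt x)).sum + (as.dropLast.map (mdist M Mopt)).sum := by
  induction as with
  | nil => exact absurd rfl hne
  | cons a rest ih =>
    have haA : a ∈ A := hsub a (by simp)
    cases rest with
    | nil =>
      have hnotin : (a, tauF Mopt a) ∉ M :=
        mopt_edge_notin_M G haA (hlast' a (by simp))
      show netCost M (pathEdges A [a, tauF Mopt a]) = _ ∧
        eucLen (pathEdges A [a, tauF Mopt a]) = _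
      rw [pathEdges_pair, edgeOf_mem haA]
      simp [netCost, eucLen, hnotin]
    | cons a' rest' =>
      have hn : nxt M Mopt a = some a' := (List.isChain_cons_cons.1 hch).1
      have hne' : a ≠ a' := by
        intro h; subst h; exact (List.nodup_cons.1 hnd).1 (by simp)
      have hnotin : (a, tauF Mopt a) ∉ M :=
        mopt_edge_notin_M G haA (by rw [hn]; intro h; exact hne' (Option.some_inj.1 h).symm)
      have hmem2 : (a', tauF Mopt a) ∈ M := (G.mem_M_iff_nxt haA).2 hn
      have hivl : ivl Mopt (a :: a' :: rest') =
          a :: tauF Mopt a :: ivl Mopt (a' :: rest') := rfl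
      have hivl2 : ivl Mopt (a' :: rest') = a' :: tauF Mopt a' :: ivl Mopt rest' := rfl
      have hE : pathEdges A (ivl Mopt (a :: a' :: rest')) =
          (a, tauF Mopt a) :: (a', tauF Mopt a) :: pathEdges A (ivl Mopt (a' :: rest')) := by
        rw [hivl, pathEdges_cons, edgeOf_mem haA]
        congr 1
        rw [hivl2, pathEdges_cons, edgeOf_not_mem (tau_not_mem_A G haA)]
      have IH := ih (by simp) (fun x hx => hsub x (by simp [hx]))
        (List.isChain_cons_cons.1 hch).2 (List.nodup_cons.1 hnd).2
        (fun z hz => hlast' z (by rw [List.getLast?_cons_cons]; exact hz))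
      have hmd : mdist M Mopt a = dist a' (tauF Mopt a) := mdist_some hn
      rw [hE, netCost_cons, netCost_cons, eucLen_cons, eucLen_cons, IH.1, IH.2]
      rw [if_neg hnotin, if_pos hmem2]
      have hdl : (a :: a' :: rest').dropLast = a :: (a' :: rest').dropLast := by
        simp [List.dropLast]
      rw [hdl]
      simp only [List.map_cons, List.sum_cons, hmd]
      constructor <;> ring

theorem ivl_nodup (as : List (Pt d)) (hsub : ∀ x ∈ as, x ∈ A) (hnd : as.Nodup) :
    (ivl Mopt as).Nodup := by
  induction as with
  | nil => simp [ivl]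
  | cons a rest ih =>
    have haA : a ∈ A := hsub a (by simp)
    have hrest : ∀ x ∈ rest, x ∈ A := fun x hx => hsub x (by simp [hx])
    have hnd' := List.nodup_cons.1 hnd
    show (a :: tauF Mopt a :: ivl Mopt rest).Nodup
    refine List.nodup_cons.2 ⟨?_, List.nodup_cons.2 ⟨?_, ih hrest hnd'.2⟩⟩
    · intro h
      rcases List.mem_cons.1 h with h | h
      · exact tau_ne_self G haA h
      · rcases mem_ivl.1 h with h | ⟨b, hb, rfl⟩
        · exact hnd'.1 h
        · exact tau_not_mem_A G (hrest b hb) (by exact haA) |>.elim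
    · intro h
      rcases mem_ivl.1 h with h | ⟨b, hb, hh⟩
      · exact tau_not_mem_A G haA (hrest _ h)
      · exact hnd'.1 (G.tau_injOn haA (hrest b hb) hh ▸ hb)

theorem ivl_mem_union {as : List (Pt d)} (hsub : ∀ x ∈ as, x ∈ A) {p : Pt d}
    (hp : p ∈ ivl Mopt as) : p ∈ A ∪ B := by
  rcases mem_ivl.1 hp with h | ⟨b, hb, rfl⟩
  · exact Finset.mem_union_left _ (hsub _ h)
  · exact Finset.mem_union_right _ (G.tau_mem_B (hsub _ hb))

theorem ivl_chain'_bipartite (as : List (Pt d)) (hsub : ∀ x ∈ as, x ∈ A) :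
    (ivl Mopt as).Chain' (fun u v => (u ∈ A ∧ v ∈ B) ∨ (u ∈ B ∧ v ∈ A)) := by
  induction as with
  | nil => simp [ivl, List.Chain']
  | cons a rest ih =>
    have haA : a ∈ A := hsub a (by simp)
    have hrest : ∀ x ∈ rest, x ∈ A := fun x hx => hsub x (by simp [hx])
    show List.Chain' _ (a :: tauF Mopt a :: ivl Mopt rest)
    refine List.isChain_cons_cons.2 ⟨Or.inl ⟨haA, G.tau_mem_B haA⟩, ?_⟩
    refine List.isChain_cons.2 ⟨?_, ih hrest⟩
    intro y hy
    cases as' : rest with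
    | nil => subst as'; simp [ivl] at hy
    | cons b t =>
      subst as'
      have : (ivl Mopt (b :: t)).head? = some b := rfl
      rw [this] at hy
      exact Or.inr ⟨G.tau_mem_B haA, (Option.some_inj.1 hy) ▸ hrest b (by simp)⟩

theorem ivl_chain'_alt (as : List (Pt d)) (hne : as ≠ []) (hsub : ∀ x ∈ as, x ∈ A)
    (hch : List.Chain' (fun x y => nxt M Mopt x = some y) as) (hnd : as.Nodup)
    (hlast' : ∀ z, as.getLast? = some z → nxt M Mopt z ≠ some z) :
    (pathEdges A (ivl Mopt as)).Chain' (AltRel M) := by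
  induction as with
  | nil => exact absurd rfl hne
  | cons a rest ih =>
    have haA : a ∈ A := hsub a (by simp)
    cases rest with
    | nil =>
      show List.Chain' _ (pathEdges A [a, tauF Mopt a])
      rw [pathEdges_pair]
      simp [List.Chain']
    | cons a' rest' =>
      have hn : nxt M Mopt a = some a' := (List.isChain_cons_cons.1 hch).1
      have hne' : a ≠ a' := by
        intro h; subst h; exact (List.nodup_cons.1 hnd).1 (by simp)
      have hnotin : (a, tauF Mopt a) ∉ M :=
        mopt_edge_notin_M G haA (by rw [hn]; intro h; exact hne' (Option.some_inj.1 h).symm)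
      have hmem2 : (a', tauF Mopt a) ∈ M := (G.mem_M_iff_nxt haA).2 hn
      have ha'A : a' ∈ A := hsub a' (by simp)
      have hE : pathEdges A (ivl Mopt (a :: a' :: rest')) =
          (a, tauF Mopt a) :: (a', tauF Mopt a) :: pathEdges A (ivl Mopt (a' :: rest')) := by
        show pathEdges A (a :: tauF Mopt a :: ivl Mopt (a' :: rest')) = _
        rw [pathEdges_cons, edgeOf_mem haA]
        congr 1
        show pathEdges A (tauF Mopt a :: a' :: tauF Mopt a' :: ivl Mopt rest') = _
        rw [pathEdges_cons, edgeOf_not_mem (tau_not_mem_A G haA)]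
        rfl
      rw [hE]
      refine List.isChain_cons_cons.2 ⟨altRel_ff hnotin hmem2, ?_⟩
      refine List.isChain_cons.2 ⟨?_, ?_⟩
      · intro e he
        have hhead : (pathEdges A (ivl Mopt (a' :: rest'))).head? =
            some (a', tauF Mopt a') := by
          show (pathEdges A (a' :: tauF Mopt a' :: ivl Mopt rest')).head? = _
          rw [pathEdges_cons, edgeOf_mem ha'A]
          rfl
        rw [hhead] at he
        have he' := Option.some_inj.1 he
        subst he'
        -- (a', τ a') ∉ M
        have : nxt M Mopt a' ≠ some a' := by
          cases rest' with
          | nil => exact hlast' a' (by simp)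
          | cons a'' t =>
            have hn2 : nxt M Mopt a' = some a'' := (List.isChain_cons_cons.1 (List.isChain_cons_cons.1 hch).2).1
            have : a' ≠ a'' := by
              intro h
              have := (List.nodup_cons.1 (List.nodup_cons.1 hnd).2).1
              exact this (h ▸ (by simp))
            rw [hn2]; intro h; exact this (Option.some_inj.1 h).symm
        exact altRel_tt hmem2 (mopt_edge_notin_M G ha'A this)
      · exact ih (by simp) (fun x hx => hsub x (by simp [hx])) (List.isChain_cons_cons.1 hch).2
          (List.nodup_cons.1 hnd).2
          (fun z hz => hlast' z (by rw [List.getLast?_cons_cons]; exact hz))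

end IVLGood

section Assemble

variable {d : ℕ} {A B : Finset (Pt d)} {M Mopt : Finset (Pt d × Pt d)}

theorem mpart_none {b : Pt d} (h : mpart M b = none) : ¬∃ e, e ∈ M ∧ e.2 = b := by
  intro hex
  rw [mpart, dif_pos hex] at h
  simp at h

theorem ivl_length {as : List (Pt d)} : (ivl Mopt as).length = 2 * as.length := by
  induction as with
  | nil => simp [ivl]
  | cons a r ih => show (a :: tauF Mopt a :: ivl Mopt r).length = _; simp [ih]; ring

theorem sum_map_w {c : ℝ} {f g : Pt d → ℝ} (l : List (Pt d)) :
    (l.map (fun x => (1 + c) * f x + (c - 1) * g x)).sum =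
      (1 + c) * (l.map f).sum + (c - 1) * (l.map g).sum := by
  induction l with
  | nil => simp
  | cons a r ih => simp [ih]; ring

theorem sum_map_dropLast {f : Pt d → ℝ} {l : List (Pt d)} {z : Pt d}
    (h : l.getLast? = some z) :
    (l.map f).sum = (l.dropLast.map f).sum + f z := by
  have hne : l ≠ [] := by
    intro hl; rw [hl] at h; simp at h
  have hz : l.getLast hne = z := (List.getLast?_eq_getLast hne ▸ h : _) |> Option.some_inj.1
  conv_lhs => rw [← List.dropLast_append_getLast hne]
  rw [List.map_append, List.sum_append, hz]
  simp

variable (G : Good A B M Mopt)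
include G

theorem pathEdges_ivl_getLast (as : List (Pt d)) (hne : as ≠ [])
    (hsub : ∀ x ∈ as, x ∈ A) :
    (pathEdges A (ivl Mopt as)).getLast? =
      as.getLast?.map (fun z => (z, tauF Mopt z)) := by
  induction as with
  | nil => exact absurd rfl hne
  | cons a rest ih =>
    have haA : a ∈ A := hsub a (by simp)
    cases rest with
    | nil =>
      show (pathEdges A [a, tauF Mopt a]).getLast? = _
      rw [pathEdges_pair, edgeOf_mem haA]
      simp
    | cons a' rest' =>
      have hE : pathEdges A (ivl Mopt (a :: a' :: rest')) =
          edgeOf A a (tauF Mopt a) :: edgeOf A (tauF Mopt a) a' ::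
            pathEdges A (ivl Mopt (a' :: rest')) := rfl
      have hpe_ne : pathEdges A (ivl Mopt (a' :: rest')) ≠ [] := by
        show pathEdges A (a' :: tauF Mopt a' :: ivl Mopt rest') ≠ []
        rw [pathEdges_cons]
        simp
      rw [hE, getLast?_cons_ne _ (by simp [hpe_ne]), getLast?_cons_ne _ hpe_ne,
        ih (by simp) (fun x hx => hsub x (by simp [hx])), List.getLast?_cons_cons]

/-- The chain gives an augmenting path. -/
theorem chain_isAugPath (as : List (Pt d)) (a0 : Pt d) (hhead : as.head? = some a0)
    (hsub : ∀ x ∈ as, x ∈ A)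
    (hch : List.Chain' (fun x y => nxt M Mopt x = some y) as) (hnd : as.Nodup)
    (hlast : ∀ z, as.getLast? = some z → nxt M Mopt z = none)
    (hfree : ¬∃ e ∈ M, e.1 = a0) :
    IsAugPath A B M (ivl Mopt as) := by
  have hne : as ≠ [] := by intro h; rw [h] at hhead; simp at hhead
  have hlast' : ∀ z, as.getLast? = some z → nxt M Mopt z ≠ some z := by
    intro z hz
    rw [hlast z hz]; simp
  refine ⟨⟨?_, ivl_nodup G as hsub hnd, fun p hp => ivl_mem_union G hsub hp,
    ivl_chain'_bipartite G as hsub, ivl_chain'_alt G as hne hsub hch hnd hlast'⟩, ?_, ?_⟩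
  · rw [ivl_length]
    have : as.length ≠ 0 := by simpa using hne
    omega
  · intro p hp
    have hh : (ivl Mopt as).head? = some a0 := by
      cases as with
      | nil => simp at hhead
      | cons a r =>
        simp at hhead
        show (a :: tauF Mopt a :: ivl Mopt r).head? = some a0
        simp [hhead]
    rw [hh] at hp
    have hp' := Option.some_inj.1 hp
    subst hp'
    intro e he
    constructor
    · intro h; exact hfree ⟨e, he, h⟩
    · intro h
      have hBa : e.2 ∈ B := (G.hM.1 e he).2
      have ha0 : a0 ∈ A := hsub _ (List.mem_of_mem_head? hhead)
      exact Finset.disjoint_left.1 G.disj ha0 (h ▸ hBa)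
  · intro p hp
    rw [ivl_getLast] at hp
    cases hz : as.getLast? with
    | none => rw [hz] at hp; simp at hp
    | some z =>
      rw [hz] at hp
      simp at hp
      subst hp
      have hzn : nxt M Mopt z = none := hlast z hz
      have hnoM : ¬∃ e, e ∈ M ∧ e.2 = tauF Mopt z := mpart_none hzn
      have hzA : z ∈ A := hsub z (List.mem_of_mem_getLast? hz)
      intro e he
      constructor
      · intro h
        have hAa : e.1 ∈ A := (G.hM.1 e he).1
        exact Finset.disjoint_left.1 G.disj (h ▸ hAa) (G.tau_mem_B hzA)
      · intro h; exact hnoM ⟨e, he, h⟩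

/-- The adjusted cost of the chain path. -/
theorem chain_adjCost (c0 θ : ℝ) (as : List (Pt d)) (hne : as ≠ [])
    (hsub : ∀ x ∈ as, x ∈ A)
    (hch : List.Chain' (fun x y => nxt M Mopt x = some y) as) (hnd : as.Nodup)
    (hlast : ∀ z, as.getLast? = some z → nxt M Mopt z = none) :
    adjCost c0 θ M (pathEdges A (ivl Mopt as)) =
      (as.map (fun x => (1 + c0*θ) * dist x (tauF Mopt x) +
        (c0*θ - 1) * mdist M Mopt x)).sum := by
  have hlast' : ∀ z, as.getLast? = some z → nxt M Mopt z ≠ some z := by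
    intro z hz
    rw [hlast z hz]; simp
  obtain ⟨hnet, hlen⟩ := pe_net_len G as hne hsub hch hnd hlast'
  cases hz : as.getLast? with
  | none => rw [List.getLast?_eq_none_iff] at hz; exact absurd hz hne
  | some z =>
    have hT : (as.map (mdist M Mopt)).sum = (as.dropLast.map (mdist M Mopt)).sum := by
      rw [sum_map_dropLast hz, mdist_none (hlast z hz)]
      simp
    rw [adjCost, hnet, hlen, sum_map_w, ← hT]
    ring

/-- The cycle gives an alternating cycle. -/
theorem cyc_isAltCycle (as : List (Pt d)) (a0 z : Pt d) (hhead : as.head? = some a0)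
    (hzlast : as.getLast? = some z) (hlen2 : 2 ≤ as.length)
    (hsub : ∀ x ∈ as, x ∈ A)
    (hch : List.Chain' (fun x y => nxt M Mopt x = some y) as) (hnd : as.Nodup)
    (hwrap : nxt M Mopt z = some a0) :
    IsAltCycle A B M (ivl Mopt as) := by
  have hne : as ≠ [] := by intro h; rw [h] at hhead; simp at hhead
  have ha0A : a0 ∈ A := hsub a0 (List.mem_of_mem_head? hhead)
  have hzA : z ∈ A := hsub z (List.mem_of_mem_getLast? hzlast)
  have ha0z : a0 ≠ z := by
    intro h
    subst h
    -- head = last in a nodup list of length ≥ 2: contradiction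
    cases as with
    | nil => simp at hhead
    | cons a r =>
      simp at hhead
      subst hhead
      cases r with
      | nil => simp at hlen2
      | cons b t =>
        rw [getLast?_cons_ne _ (by simp)] at hzlast
        exact (List.nodup_cons.1 hnd).1 (List.mem_of_mem_getLast? hzlast)
  have hlast' : ∀ y, as.getLast? = some y → nxt M Mopt y ≠ some y := by
    intro y hy
    rw [hy] at hzlast
    have := Option.some_inj.1 hzlast
    subst this
    rw [hwrap]
    intro h
    exact ha0z (Option.some_inj.1 h)
  have htake : (ivl Mopt as).take 1 = [a0] := by
    cases as with
    | nil => simp at hhead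
    | cons a r => simp at hhead; subst hhead; rfl
  have hivl_last : (ivl Mopt as).getLast? = some (tauF Mopt z) := by
    rw [ivl_getLast, hzlast]; rfl
  have hwrapedge : (a0, tauF Mopt z) ∈ M := (G.mem_M_iff_nxt hzA).2 hwrap
  have hCE : cycleEdges A (ivl Mopt as) =
      pathEdges A (ivl Mopt as) ++ [(a0, tauF Mopt z)] := by
    rw [cycleEdges, htake, pathEdges_append_singleton hivl_last,
      edgeOf_not_mem (tau_not_mem_A G hzA)]
  have hpelast : (pathEdges A (ivl Mopt as)).getLast? = some (z, tauF Mopt z) := by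
    rw [pathEdges_ivl_getLast G as hne hsub, hzlast]; rfl
  have hznotin : (z, tauF Mopt z) ∉ M := mopt_edge_notin_M G hzA (hlast' z hzlast)
  -- head edge
  obtain ⟨a1, r1, has⟩ : ∃ a1 r1, as = a0 :: a1 :: r1 := by
    cases as with
    | nil => simp at hhead
    | cons a r =>
      simp at hhead
      subst hhead
      cases r with
      | nil => simp at hlen2
      | cons b t => exact ⟨b, t, rfl⟩
  have hn01 : nxt M Mopt a0 = some a1 := by rw [has] at hch; exact (List.isChain_cons_cons.1 hch).1
  have ha01 : a0 ≠ a1 := by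
    intro h
    rw [has] at hnd
    exact (List.nodup_cons.1 hnd).1 (h ▸ (by simp))
  have hheadnotin : (a0, tauF Mopt a0) ∉ M :=
    mopt_edge_notin_M G ha0A (by rw [hn01]; intro h; exact ha01 (Option.some_inj.1 h).symm)
  have hpe_ne : pathEdges A (ivl Mopt as) ≠ [] := by
    intro h
    have := hpelast
    rw [h] at this
    simp at this
  have hpehead : (pathEdges A (ivl Mopt as)).head? = some (a0, tauF Mopt a0) := by
    rw [has]
    show (pathEdges A (a0 :: tauF Mopt a0 :: ivl Mopt (a1 :: r1))).head? = _
    rw [pathEdges_cons, edgeOf_mem ha0A]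
    rfl
  have hCEhead : (cycleEdges A (ivl Mopt as)).head? = some (a0, tauF Mopt a0) := by
    rw [hCE]
    rw [List.head?_append_of_ne_nil _ hpe_ne]
    exact hpehead
  have hCElast : (cycleEdges A (ivl Mopt as)).getLast? = some (a0, tauF Mopt z) := by
    rw [hCE, List.getLast?_concat]
  refine ⟨?_, ivl_nodup G as hsub hnd, fun p hp => ivl_mem_union G hsub hp, ?_, ?_, ?_⟩
  · rw [ivl_length]; omega
  · -- bipartite chain around the cycle
    rw [htake]
    apply List.isChain_append.2
    refine ⟨ivl_chain'_bipartite G as hsub, by simp, ?_⟩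
    intro x hx y hy
    simp at hy
    subst hy
    rw [hivl_last] at hx
    have := Option.some_inj.1 hx
    subst this
    exact Or.inr ⟨G.tau_mem_B hzA, ha0A⟩
  · -- alternation around the cycle
    rw [hCE]
    apply List.isChain_append.2
    refine ⟨ivl_chain'_alt G as hne hsub hch hnd hlast', by simp, ?_⟩
    intro x hx y hy
    simp at hy
    subst hy
    rw [hpelast] at hx
    have := Option.some_inj.1 hx
    subst this
    exact altRel_ff hznotin hwrapedge
  · intro e f hee hff
    rw [hCEhead] at hee
    rw [hCElast] at hff
    have := Option.some_inj.1 hee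
    subst this
    have := Option.some_inj.1 hff
    subst this
    exact altRel_tt hwrapedge hheadnotin

/-- The adjusted cost of the cycle. -/
theorem cyc_adjCost (c0 θ : ℝ) (as : List (Pt d)) (a0 z : Pt d) (hhead : as.head? = some a0)
    (hzlast : as.getLast? = some z) (hlen2 : 2 ≤ as.length)
    (hsub : ∀ x ∈ as, x ∈ A)
    (hch : List.Chain' (fun x y => nxt M Mopt x = some y) as) (hnd : as.Nodup)
    (hwrap : nxt M Mopt z = some a0) :
    adjCost c0 θ M (cycleEdges A (ivl Mopt as)) =
      (as.map (fun x => (1 + c0*θ) * dist x (tauF Mopt x) +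
        (c0*θ - 1) * mdist M Mopt x)).sum := by
  have hne : as ≠ [] := by intro h; rw [h] at hhead; simp at hhead
  have hzA : z ∈ A := hsub z (List.mem_of_mem_getLast? hzlast)
  have ha0z : a0 ≠ z := by
    intro h
    subst h
    cases as with
    | nil => simp at hhead
    | cons a r =>
      simp at hhead
      subst hhead
      cases r with
      | nil => simp at hlen2
      | cons b t =>
        rw [getLast?_cons_ne _ (by simp)] at hzlast
        exact (List.nodup_cons.1 hnd).1 (List.mem_of_mem_getLast? hzlast)
  have hlast' : ∀ y, as.getLast? = some y → nxt M Mopt y ≠ some y := by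
    intro y hy
    rw [hy] at hzlast
    have := Option.some_inj.1 hzlast
    subst this
    rw [hwrap]
    intro h
    exact ha0z (Option.some_inj.1 h)
  have htake : (ivl Mopt as).take 1 = [a0] := by
    cases as with
    | nil => simp at hhead
    | cons a r => simp at hhead; subst hhead; rfl
  have hivl_last : (ivl Mopt as).getLast? = some (tauF Mopt z) := by
    rw [ivl_getLast, hzlast]; rfl
  have hCE : cycleEdges A (ivl Mopt as) =
      pathEdges A (ivl Mopt as) ++ [(a0, tauF Mopt z)] := by
    rw [cycleEdges, htake, pathEdges_append_singleton hivl_last,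
      edgeOf_not_mem (tau_not_mem_A G hzA)]
  have hwrapedge : (a0, tauF Mopt z) ∈ M := (G.mem_M_iff_nxt hzA).2 hwrap
  obtain ⟨hnet, hlen⟩ := pe_net_len G as hne hsub hch hnd hlast'
  have hT : (as.map (mdist M Mopt)).sum =
      (as.dropLast.map (mdist M Mopt)).sum + dist a0 (tauF Mopt z) := by
    rw [sum_map_dropLast hzlast, mdist_some hwrap]
  rw [adjCost, hCE, netCost_append, eucLen_append, hnet, hlen, sum_map_w, hT]
  simp [netCost, eucLen, hwrapedge]
  ring

end Assemble

section Decomp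

variable {d : ℕ} {A B : Finset (Pt d)} {M Mopt : Finset (Pt d × Pt d)}

/-- The weight of an `A`-vertex in the decomposition accounting. -/
def wF (c0 θ : ℝ) (M Mopt : Finset (Pt d × Pt d)) (x : Pt d) : ℝ :=
  (1 + c0*θ) * dist x (tauF Mopt x) + (c0*θ - 1) * mdist M Mopt x

theorem list_sum_eq_finset_sum {f : Pt d → ℝ} {l : List (Pt d)} (h : l.Nodup) :
    ∑ x ∈ l.toFinset, f x = (l.map f).sum := by
  induction l with
  | nil => simp
  | cons a r ih =>
    have h' := List.nodup_cons.1 h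
    rw [List.toFinset_cons, Finset.sum_insert (by simpa using h'.1), ih h'.2]
    simp

variable (G : Good A B M Mopt)
include G

theorem iterO_mem_S {S : Finset (Pt d)}
    (hcl : ∀ a ∈ S, ∀ a', nxt M Mopt a = some a' → a' ∈ S)
    {j : ℕ} {a x : Pt d} (ha : a ∈ S) (h : iterO M Mopt j a = some x) : x ∈ S := by
  induction j generalizing x with
  | zero => simp [iterO] at h; rwa [← h]
  | succ j ih =>
    rw [show iterO M Mopt (j+1) a = (iterO M Mopt j a).bind (nxt M Mopt) from rfl] at h
    cases hj : iterO M Mopt j a with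
    | none => rw [hj] at h; simp at h
    | some y =>
      rw [hj, Option.bind_some] at h
      exact hcl y (ih hj) x h

theorem decomp (c0 θ : ℝ) (hc0θ : 0 ≤ c0 * θ) (astar : ℝ) (hast0 : 0 ≤ astar)
    (hlb : ∀ x ∈ adjSet c0 θ A B M, astar ≤ x)
    (hcyc : ∀ L : List (Pt d), IsAltCycle A B M L → 0 ≤ adjCost c0 θ M (cycleEdges A L)) :
    ∀ N : ℕ, ∀ S : Finset (Pt d), S.card ≤ N → S ⊆ A →
    (∀ a ∈ S, ∀ a', nxt M Mopt a = some a' → a' ∈ S) →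
    (∀ a ∈ A, ∀ a', nxt M Mopt a = some a' → a' ∈ S → a ∈ S) →
    0 ≤ ∑ x ∈ S, wF c0 θ M Mopt x ∧
      ((∃ a ∈ S, ¬∃ e ∈ M, e.1 = a) → astar ≤ ∑ x ∈ S, wF c0 θ M Mopt x) := by
  intro N
  induction N with
  | zero =>
    intro S hcard _ _ _
    have : S = ∅ := Finset.card_eq_zero.1 (Nat.le_zero.1 hcard)
    subst this
    simp
  | succ N ih =>
    intro S hcard hSA hcl hcocl
    rcases Finset.eq_empty_or_nonempty S with rfl | hSne
    · simp
    by_cases hfree : ∃ a ∈ S, ¬∃ e ∈ M, e.1 = a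
    · -- CHAIN case
      obtain ⟨a0, ha0S, hfa⟩ := hfree
      have ha0A : a0 ∈ A := hSA ha0S
      have hH : NoRet M Mopt a0 := noRet_of_free G hfa
      set as : List (Pt d) := chainList M Mopt A.card a0 with has
      have hnd : as.Nodup := chainList_nodup G ha0A hH
      have hch : List.Chain' (fun x y => nxt M Mopt x = some y) as := chainList_chain'
      have hsubA : ∀ x ∈ as, x ∈ A := fun x hx => chainList_subset_A G ha0A hx
      have hsubS : ∀ x ∈ as, x ∈ S := by
        intro x hx
        rcases mem_chainList_iter hx with ⟨j, hj⟩
        exact iterO_mem_S G hcl ha0S hj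
      have hhead : as.head? = some a0 := by
        rw [List.head?_eq_head chainList_ne_nil, chainList_head]
      have hlastn : ∀ z, as.getLast? = some z → nxt M Mopt z = none := by
        intro z hz
        exact chainList_last_none G ha0A hH hz
      have hpath : IsAugPath A B M (ivl Mopt as) :=
        chain_isAugPath G as a0 hhead hsubA hch hnd hlastn hfa
      have hadj : astar ≤ adjCost c0 θ M (pathEdges A (ivl Mopt as)) :=
        hlb _ ⟨ivl Mopt as, hpath, rfl⟩
      have hadj_eq : adjCost c0 θ M (pathEdges A (ivl Mopt as)) =
          ∑ x ∈ as.toFinset, wF c0 θ M Mopt x := by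
        rw [chain_adjCost G c0 θ as chainList_ne_nil hsubA hch hnd hlastn,
          list_sum_eq_finset_sum hnd]
        rfl
      set O : Finset (Pt d) := as.toFinset with hO
      have hOS : O ⊆ S := fun x hx => hsubS x (List.mem_toFinset.1 hx)
      have ha0O : a0 ∈ O := List.mem_toFinset.2 self_mem_chainList
      set S' : Finset (Pt d) := S \ O with hS'
      have hcard' : S'.card ≤ N := by
        have h1 : S'.card < S.card := Finset.card_lt_card
          ⟨Finset.sdiff_subset, fun hsub => (Finset.mem_sdiff.1 (hsub ha0S)).2 ha0O⟩
        omega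
      have hS'A : S' ⊆ A := fun x hx => hSA (Finset.mem_sdiff.1 hx).1
      have hcl' : ∀ a ∈ S', ∀ a', nxt M Mopt a = some a' → a' ∈ S' := by
        intro a haS' u hu
        obtain ⟨haS, haO⟩ := Finset.mem_sdiff.1 haS'
        refine Finset.mem_sdiff.2 ⟨hcl a haS u hu, ?_⟩
        intro huO
        rcases chainList_pred (List.mem_toFinset.1 huO) with rfl | ⟨x, hx, hxu⟩
        · exact G.free_not_image hfa hu
        · have : a = x := G.nxt_injOn (hSA haS) (hsubA x hx) hu hxu
          exact haO (this ▸ List.mem_toFinset.2 hx)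
      have hcocl' : ∀ a ∈ A, ∀ a', nxt M Mopt a = some a' → a' ∈ S' → a ∈ S' := by
        intro a haA u hu huS'
        obtain ⟨huS, huO⟩ := Finset.mem_sdiff.1 huS'
        refine Finset.mem_sdiff.2 ⟨hcocl a haA u hu huS, ?_⟩
        intro haO
        rcases chainList_succ_mem (List.mem_toFinset.1 haO) hlastn with h' | ⟨v, hv, hav⟩
        · rw [h'] at hu; simp at hu
        · rw [hav] at hu
          exact huO (Option.some_inj.1 hu ▸ List.mem_toFinset.2 hv)
      have IH := ih S' hcard' hS'A hcl' hcocl'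
      have hsplit : ∑ x ∈ S, wF c0 θ M Mopt x =
          ∑ x ∈ S', wF c0 θ M Mopt x + ∑ x ∈ O, wF c0 θ M Mopt x := by
        rw [hS', Finset.sum_sdiff hOS]
      have hOsum : astar ≤ ∑ x ∈ O, wF c0 θ M Mopt x := by
        rw [hO, ← hadj_eq]; exact hadj
      constructor
      · rw [hsplit]
        have := IH.1
        linarith
      · intro _
        rw [hsplit]
        have := IH.1
        linarith
    · -- CYCLE case: no free vertex in S
      push_neg at hfree
      obtain ⟨a0, ha0S⟩ := hSne
      -- totality of nxt on S
      have htotS : ∀ u ∈ S, ∃ a ∈ S, nxt M Mopt a = some u := by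
        intro u huS
        obtain ⟨e, heM, he1⟩ := hfree u huS
        obtain ⟨a, haA, hta⟩ := G.tau_surj (G.hM.1 e heM).2
        have : (u, tauF Mopt a) ∈ M := by
          rw [hta, ← he1]
          exact heM
        have hnu : nxt M Mopt a = some u := (G.mem_M_iff_nxt haA).1 this
        exact ⟨a, hcocl a haA u hnu huS, hnu⟩
      set F : Pt d → Pt d := fun x => (nxt M Mopt x).getD x with hF
      have hSd : ∀ a ∈ S, nxt M Mopt a = some (F a) := by
        -- counting: the filter of defined vertices has full cardinality
        classical
        set Sd := S.filter (fun a => (nxt M Mopt a).isSome) with hSddef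
        have hsurj : Set.SurjOn F Sd S := by
          intro u huS
          obtain ⟨a, haS, hna⟩ := htotS u huS
          refine ⟨a, ?_, ?_⟩
          · simp only [hSddef, Finset.coe_filter, Set.mem_setOf_eq]
            exact ⟨haS, by rw [hna]; rfl⟩
          · show F a = u
            rw [hF]; simp [hna]
        have hcardle : S.card ≤ Sd.card := Finset.card_le_card_of_surjOn F hsurj
        have hSdS : Sd ⊆ S := Finset.filter_subset _ _
        have : Sd = S := Finset.eq_of_subset_of_card_le hSdS hcardle
        intro a haS
        have haSd : a ∈ Sd := this ▸ haS
        have hsome : (nxt M Mopt a).isSome := (Finset.mem_filter.1 haSd).2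
        obtain ⟨u, hu⟩ := Option.isSome_iff_exists.1 hsome
        show nxt M Mopt a = some ((nxt M Mopt a).getD a)
        rw [hu]
        rfl
      have hFS : ∀ a ∈ S, F a ∈ S := fun a haS => hcl a haS (F a) (hSd a haS)
      have hFinj : ∀ a ∈ S, ∀ b ∈ S, F a = F b → a = b := by
        intro a haS b hbS h
        exact G.nxt_injOn (hSA haS) (hSA hbS) (hSd a haS) (h ▸ hSd b hbS)
      have hiterS : ∀ j, F^[j] a0 ∈ S := by
        intro j
        induction j with
        | zero => simpa using ha0S
        | succ j ihj => rw [Function.iterate_succ_apply']; exact hFS _ ihj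
      have hcancel : ∀ k, ∀ x y, x ∈ S → y ∈ S → F^[k] x = F^[k] y → x = y := by
        intro k
        induction k with
        | zero => intro x y _ _ h; simpa using h
        | succ k ihk =>
          intro x y hx hy h
          rw [Function.iterate_succ_apply, Function.iterate_succ_apply] at h
          exact hFinj x hx y hy (ihk (F x) (F y) (hFS x hx) (hFS y hy) h)
      have hper : ∃ k, 1 ≤ k ∧ F^[k] a0 = a0 := by
        have hmaps : ∀ j ∈ Finset.range (S.card + 1), F^[j] a0 ∈ S :=
          fun j _ => hiterS j
        obtain ⟨i, hi, j, hj, hij, heq⟩ :=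
          Finset.exists_ne_map_eq_of_card_lt_of_maps_to (by simp) hmaps
        rcases Nat.lt_or_ge i j with h | h
        · refine ⟨j - i, by omega, ?_⟩
          have : F^[i] (F^[j-i] a0) = F^[i] a0 := by
            rw [← Function.iterate_add_apply]
            rw [show i + (j - i) = j by omega]
            exact heq.symm
          exact hcancel i _ _ (hiterS _) ha0S this
        · have h' : j < i := by omega
          refine ⟨i - j, by omega, ?_⟩
          have : F^[j] (F^[i-j] a0) = F^[j] a0 := by
            rw [← Function.iterate_add_apply]
            rw [show j + (i - j) = i by omega]
            exact heq
          exact hcancel j _ _ (hiterS _) ha0S this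
      set m := Nat.find hper with hm
      obtain ⟨hm1, hmret⟩ : 1 ≤ m ∧ F^[m] a0 = a0 := Nat.find_spec hper
      have hmmin : ∀ k, 1 ≤ k → k < m → F^[k] a0 ≠ a0 := by
        intro k hk1 hkm h
        exact Nat.find_min hper hkm ⟨hk1, h⟩
      rcases Nat.lt_or_ge m 2 with hm2 | hm2
      · -- m = 1 : fixed point (common edge)
        have hm1' : m = 1 := by omega
        have hfix : F a0 = a0 := by
          have := hmret
          rw [hm1'] at this
          simpa using this
        have hnx : nxt M Mopt a0 = some a0 := by
          have := hSd a0 ha0S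
          rwa [hfix] at this
        set S' := S.erase a0 with hS'
        have hcard' : S'.card ≤ N := by
          have h0 : 0 < S.card := Finset.card_pos.2 ⟨a0, ha0S⟩
          have hce : S'.card = S.card - 1 := by
            rw [hS']; exact Finset.card_erase_of_mem ha0S
          omega
        have hS'A : S' ⊆ A := fun x hx => hSA (Finset.mem_of_mem_erase hx)
        have hcl' : ∀ a ∈ S', ∀ a', nxt M Mopt a = some a' → a' ∈ S' := by
          intro a haS' u hu
          have haS := Finset.mem_of_mem_erase haS'
          refine Finset.mem_erase.2 ⟨?_, hcl a haS u hu⟩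
          intro h
          subst h
          exact (Finset.mem_erase.1 haS').1
            (G.nxt_injOn (hSA haS) (hSA ha0S) hu hnx)
        have hcocl' : ∀ a ∈ A, ∀ a', nxt M Mopt a = some a' → a' ∈ S' → a ∈ S' := by
          intro a haA u hu huS'
          obtain ⟨hune, huS⟩ := Finset.mem_erase.1 huS'
          refine Finset.mem_erase.2 ⟨?_, hcocl a haA u hu huS⟩
          intro h
          subst h
          rw [hnx] at hu
          exact hune (Option.some_inj.1 hu).symm
        have IH := ih S' hcard' hS'A hcl' hcocl'
        have hw0 : wF c0 θ M Mopt a0 = 2 * (c0*θ) * dist a0 (tauF Mopt a0) := by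
          rw [wF, mdist_some hnx]
          ring
        have hsplit : ∑ x ∈ S, wF c0 θ M Mopt x =
            wF c0 θ M Mopt a0 + ∑ x ∈ S', wF c0 θ M Mopt x := by
          rw [hS', Finset.add_sum_erase _ _ ha0S]
        constructor
        · rw [hsplit, hw0]
          have h1 := IH.1
          have h2 : 0 ≤ 2 * (c0*θ) * dist a0 (tauF Mopt a0) := by
            have := dist_nonneg (x := a0) (y := tauF Mopt a0)
            positivity
          linarith
        · intro h
          exfalso
          obtain ⟨a, haS, hfa⟩ := h
          exact hfa (hfree a haS)
      · -- m ≥ 2 : genuine alternating cycle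
        set as : List (Pt d) := (List.range m).map (fun j => F^[j] a0) with has
        have hlen : as.length = m := by simp [has]
        have hmem1 : ∀ j, j < m → F^[j] a0 ∈ as := by
          intro j hj
          rw [has]
          exact List.mem_map.2 ⟨j, List.mem_range.2 hj, rfl⟩
        have hmem2 : ∀ x ∈ as, ∃ j < m, F^[j] a0 = x := by
          intro x hx
          rw [has] at hx
          rcases List.mem_map.1 hx with ⟨j, hj, h⟩
          exact ⟨j, List.mem_range.1 hj, h⟩
        have hsubS : ∀ x ∈ as, x ∈ S := by
          intro x hx
          rcases hmem2 x hx with ⟨j, _, rfl⟩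
          exact hiterS j
        have hsubA : ∀ x ∈ as, x ∈ A := fun x hx => hSA (hsubS x hx)
        have hnd : as.Nodup := by
          rw [has]
          refine List.Nodup.map_on ?_ (List.nodup_range (n := m))
          intro i hi j hj hijeq
          rw [List.mem_range] at hi hj
          by_contra hne
          rcases Nat.lt_or_ge i j with h | h
          · have : F^[j - i] a0 = a0 := by
              apply hcancel i _ _ (hiterS _) ha0S
              rw [← Function.iterate_add_apply, show i + (j - i) = j by omega]
              exact hijeq.symm
            exact hmmin (j - i) (by omega) (by omega) this
          · have h' : j < i := by omega
            have : F^[i - j] a0 = a0 := by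
              apply hcancel j _ _ (hiterS _) ha0S
              rw [← Function.iterate_add_apply, show j + (i - j) = i by omega]
              exact hijeq
            exact hmmin (i - j) (by omega) (by omega) this
        have hhead : as.head? = some a0 := by
          obtain ⟨m', hm'⟩ : ∃ m', m = m' + 1 := ⟨m - 1, by omega⟩
          rw [has, hm', List.range_succ_eq_map]
          rfl
        have hzlast : as.getLast? = some (F^[m-1] a0) := by
          obtain ⟨m', hm'⟩ : ∃ m', m = m' + 1 := ⟨m - 1, by omega⟩
          rw [has, hm', List.range_succ, List.map_append, List.map_singleton,
            List.getLast?_concat]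
          have hmm : m' = m - 1 := by omega
          simp [hmm]
        have hch : List.Chain' (fun x y => nxt M Mopt x = some y) as := by
          rw [has]
          apply (List.isChain_map _).2
          obtain ⟨m', hm'⟩ : ∃ m', m = m' + 1 := ⟨m - 1, by omega⟩
          rw [hm']
          apply (List.isChain_range_succ _ m').2
          intro k hk
          show nxt M Mopt (F^[k] a0) = some (F^[k+1] a0)
          rw [Function.iterate_succ_apply']
          exact hSd _ (hiterS k)
        have hwrap : nxt M Mopt (F^[m-1] a0) = some a0 := by
          have h1 : F (F^[m-1] a0) = a0 := by
            obtain ⟨m', hm'⟩ : ∃ m', m = m' + 1 := ⟨m - 1, by omega⟩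
            rw [hm', show m' + 1 - 1 = m' from rfl,
              ← Function.iterate_succ_apply' F m' a0]
            rw [hm'] at hmret
            exact hmret
          have hh := hSd (F^[m-1] a0) (hiterS (m-1))
          rw [h1] at hh
          exact hh
        have hcycle : IsAltCycle A B M (ivl Mopt as) :=
          cyc_isAltCycle G as a0 (F^[m-1] a0) hhead hzlast (by omega) hsubA hch hnd hwrap
        have hadj : 0 ≤ adjCost c0 θ M (cycleEdges A (ivl Mopt as)) := hcyc _ hcycle
        have hadj_eq : adjCost c0 θ M (cycleEdges A (ivl Mopt as)) =
            ∑ x ∈ as.toFinset, wF c0 θ M Mopt x := by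
          rw [cyc_adjCost G c0 θ as a0 (F^[m-1] a0) hhead hzlast (by omega) hsubA hch hnd hwrap,
            list_sum_eq_finset_sum hnd]
          rfl
        set O : Finset (Pt d) := as.toFinset with hO
        have hOS : O ⊆ S := fun x hx => hsubS x (List.mem_toFinset.1 hx)
        have ha0O : a0 ∈ O := by
          apply List.mem_toFinset.2
          exact hmem1 0 (by omega)
        set S' : Finset (Pt d) := S \ O with hS'
        have hcard' : S'.card ≤ N := by
          have h1 : S'.card < S.card := Finset.card_lt_card
            ⟨Finset.sdiff_subset, fun hsub => (Finset.mem_sdiff.1 (hsub ha0S)).2 ha0O⟩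
          omega
        have hS'A : S' ⊆ A := fun x hx => hSA (Finset.mem_sdiff.1 hx).1
        -- every element of O has a predecessor in O and a successor in O
        have hpredO : ∀ u ∈ O, ∃ p ∈ O, nxt M Mopt p = some u := by
          intro u huO
          rcases hmem2 u (List.mem_toFinset.1 huO) with ⟨j, hjm, rfl⟩
          rcases Nat.eq_zero_or_pos j with rfl | hj0
          · refine ⟨F^[m-1] a0, List.mem_toFinset.2 (hmem1 (m-1) (by omega)), ?_⟩
            simpa using hwrap
          · refine ⟨F^[j-1] a0, List.mem_toFinset.2 (hmem1 (j-1) (by omega)), ?_⟩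
            have hthis : F (F^[j-1] a0) = F^[j] a0 := by
              obtain ⟨j', hj'⟩ : ∃ j', j = j' + 1 := ⟨j - 1, by omega⟩
              rw [hj', show j' + 1 - 1 = j' from rfl]
              exact (Function.iterate_succ_apply' F j' a0).symm
            have hh := hSd (F^[j-1] a0) (hiterS (j-1))
            rw [hthis] at hh
            exact hh
        have hsuccO : ∀ x ∈ O, ∃ v ∈ O, nxt M Mopt x = some v := by
          intro x hxO
          rcases hmem2 x (List.mem_toFinset.1 hxO) with ⟨j, hjm, rfl⟩
          rcases Nat.lt_or_ge (j+1) m with h | h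
          · refine ⟨F^[j+1] a0, List.mem_toFinset.2 (hmem1 (j+1) h), ?_⟩
            rw [Function.iterate_succ_apply']
            exact hSd _ (hiterS _)
          · have hj : j = m - 1 := by omega
            subst hj
            exact ⟨a0, ha0O, hwrap⟩
        have hcl' : ∀ a ∈ S', ∀ a', nxt M Mopt a = some a' → a' ∈ S' := by
          intro a haS' u hu
          obtain ⟨haS, haO⟩ := Finset.mem_sdiff.1 haS'
          refine Finset.mem_sdiff.2 ⟨hcl a haS u hu, ?_⟩
          intro huO
          obtain ⟨p, hpO, hpu⟩ := hpredO u huO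
          have : a = p := G.nxt_injOn (hSA haS) (hSA (hOS hpO)) hu hpu
          exact haO (this ▸ hpO)
        have hcocl' : ∀ a ∈ A, ∀ a', nxt M Mopt a = some a' → a' ∈ S' → a ∈ S' := by
          intro a haA u hu huS'
          obtain ⟨huS, huO⟩ := Finset.mem_sdiff.1 huS'
          refine Finset.mem_sdiff.2 ⟨hcocl a haA u hu huS, ?_⟩
          intro haO
          obtain ⟨v, hvO, hav⟩ := hsuccO a haO
          rw [hav] at hu
          exact huO (Option.some_inj.1 hu ▸ hvO)
        have IH := ih S' hcard' hS'A hcl' hcocl'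
        have hsplit : ∑ x ∈ S, wF c0 θ M Mopt x =
            ∑ x ∈ S', wF c0 θ M Mopt x + ∑ x ∈ O, wF c0 θ M Mopt x := by
          rw [hS', Finset.sum_sdiff hOS]
        have hOsum : 0 ≤ ∑ x ∈ O, wF c0 θ M Mopt x := by
          rw [hO, ← hadj_eq]; exact hadj
        constructor
        · rw [hsplit]
          have := IH.1
          linarith
        · intro h
          exfalso
          obtain ⟨a, haS, hfa⟩ := h
          exact hfa (hfree a haS)

end Decomp

section Costs

variable {d : ℕ} {A B : Finset (Pt d)} {M Mopt : Finset (Pt d × Pt d)}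

theorem list_sum_eq_finset_sum' {α : Type*} [DecidableEq α] {f : α → ℝ} {l : List α}
    (h : l.Nodup) : ∑ x ∈ l.toFinset, f x = (l.map f).sum := by
  induction l with
  | nil => simp
  | cons a r ih =>
    have h' := List.nodup_cons.1 h
    rw [List.toFinset_cons, Finset.sum_insert (by simpa using h'.1), ih h'.2]
    simp

variable (G : Good A B M Mopt)
include G

theorem sum_dist_tau : ∑ a ∈ A, dist a (tauF Mopt a) = matchCost Mopt := by
  rw [matchCost]
  apply Finset.sum_bij (i := fun a _ => (a, tauF Mopt a))
  · intro a ha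
    exact G.mem_mopt_tau ha
  · intro a ha a' ha' h
    exact (Prod.mk.injEq _ _ _ _ ▸ h).1
  · intro e he
    refine ⟨e.1, (G.hMopt.1 e he).1, ?_⟩
    have : tauF Mopt e.1 = e.2 := G.tau_eq (by rwa [Prod.mk.eta])
    rw [this, Prod.mk.eta]
  · intro a ha
    rfl

theorem sum_mdist : ∑ a ∈ A, mdist M Mopt a = matchCost M := by
  classical
  set Ad := A.filter (fun a => (nxt M Mopt a).isSome) with hAd
  have h0 : ∑ a ∈ A, mdist M Mopt a = ∑ a ∈ Ad, mdist M Mopt a := by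
    symm
    apply Finset.sum_subset (Finset.filter_subset _ _)
    intro x hx hnx
    have : nxt M Mopt x = none := by
      rcases hn : nxt M Mopt x with _ | u
      · rfl
      · exfalso
        exact hnx (Finset.mem_filter.2 ⟨hx, by rw [hn]; rfl⟩)
    exact mdist_none this
  rw [h0, matchCost]
  apply Finset.sum_bij (i := fun a _ => ((nxt M Mopt a).getD a, tauF Mopt a))
  · intro a ha
    obtain ⟨haA, hsome⟩ := Finset.mem_filter.1 ha
    obtain ⟨u, hu⟩ := Option.isSome_iff_exists.1 hsome
    rw [hu]
    exact (G.mem_M_iff_nxt haA).2 hu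
  · intro a ha a' ha' h
    have h2 := (Prod.mk.injEq _ _ _ _ ▸ h).2
    exact G.tau_injOn (Finset.mem_filter.1 ha).1 (Finset.mem_filter.1 ha').1 h2
  · intro e he
    obtain ⟨a, haA, hta⟩ := G.tau_surj (G.hM.1 e he).2
    have hnx : nxt M Mopt a = some e.1 := by
      rw [nxt, hta]
      exact G.mpart_eq (by rwa [Prod.mk.eta])
    refine ⟨a, Finset.mem_filter.2 ⟨haA, by rw [hnx]; rfl⟩, ?_⟩
    rw [hnx, hta]
    simp [Prod.mk.eta]
  · intro a ha
    obtain ⟨haA, hsome⟩ := Finset.mem_filter.1 ha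
    obtain ⟨u, hu⟩ := Option.isSome_iff_exists.1 hsome
    rw [mdist_some hu, hu]
    rfl

theorem sum_wF (c0 θ : ℝ) :
    ∑ x ∈ A, wF c0 θ M Mopt x =
      (1 + c0*θ) * matchCost Mopt + (c0*θ - 1) * matchCost M := by
  rw [← sum_dist_tau G, ← sum_mdist G, Finset.mul_sum, Finset.mul_sum,
    ← Finset.sum_add_distrib]
  apply Finset.sum_congr rfl
  intro x _
  rw [wF]

theorem matchCost_nonneg {M' : Finset (Pt d × Pt d)} : 0 ≤ matchCost M' :=
  Finset.sum_nonneg fun e _ => dist_nonneg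

end Costs

section PiSide

variable {d : ℕ} {A B : Finset (Pt d)} {M : Finset (Pt d × Pt d)}

theorem edgeOf_or {u v : Pt d} : edgeOf A u v = (u, v) ∨ edgeOf A u v = (v, u) := by
  rw [edgeOf]
  split_ifs <;> simp

theorem pathEdges_nodup {L : List (Pt d)} (hnd : L.Nodup) : (pathEdges A L).Nodup := by
  classical
  have hzlen : ∀ {k : ℕ}, k < (pathEdges A L).length → k + 1 < L.length := by
    intro k hk
    have : (pathEdges A L).length = (L.zip L.tail).length := by simp [pathEdges]
    rw [this, List.length_zip] at hk
    cases L with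
    | nil => simp at hk
    | cons a t =>
      simp only [List.length_cons, List.tail_cons] at hk ⊢
      omega
  have hget : ∀ (k : ℕ) (hk : k < (pathEdges A L).length),
      (pathEdges A L)[k] = edgeOf A (L[k]'(by have := hzlen hk; omega))
        (L[k+1]'(hzlen hk)) := by
    intro k hk
    simp only [pathEdges, List.getElem_map, List.getElem_zip, List.getElem_tail]
  have hinj : ∀ (p q : ℕ) (hp : p < L.length) (hq : q < L.length),
      L[p] = L[q] → p = q := by
    intro p q hp hq h
    exact (List.Nodup.getElem_inj_iff hnd).1 h
  rw [List.nodup_iff_injective_get]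
  intro i j hij
  have hii := i.isLt
  have hjj := j.isLt
  rw [List.get_eq_getElem, List.get_eq_getElem, hget _ hii, hget _ hjj] at hij
  apply Fin.ext
  rcases edgeOf_or (A := A) (u := L[(i:ℕ)]'(by have := hzlen hii; omega))
      (v := L[(i:ℕ)+1]'(hzlen hii)) with h1 | h1 <;>
    rcases edgeOf_or (A := A) (u := L[(j:ℕ)]'(by have := hzlen hjj; omega))
      (v := L[(j:ℕ)+1]'(hzlen hjj)) with h2 | h2 <;>
    rw [h1, h2, Prod.mk.injEq] at hij
  · exact hinj _ _ _ _ hij.1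
  · have e1 := hinj _ _ _ _ hij.1
    have e2 := hinj _ _ _ _ hij.2
    omega
  · have e1 := hinj _ _ _ _ hij.1
    have e2 := hinj _ _ _ _ hij.2
    omega
  · have e1 := hinj _ _ _ _ hij.2
    exact e1

theorem eucLen_eq_netCost_add {E : List (Pt d × Pt d)} :
    eucLen E = netCost M E +
      2 * ((E.filter (fun e => decide (e ∈ M))).map (fun e => dist e.1 e.2)).sum := by
  classical
  induction E with
  | nil => simp [eucLen, netCost]
  | cons e E ih =>
    by_cases he : e ∈ M
    · rw [eucLen_cons, netCost_cons, if_pos he]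
      rw [show (e :: E).filter (fun e => decide (e ∈ M)) =
        e :: E.filter (fun e => decide (e ∈ M)) from by simp [List.filter_cons, he]]
      rw [List.map_cons, List.sum_cons]
      rw [ih]
      ring
    · rw [eucLen_cons, netCost_cons, if_neg he]
      rw [show (e :: E).filter (fun e => decide (e ∈ M)) =
        E.filter (fun e => decide (e ∈ M)) from by simp [List.filter_cons, he]]
      rw [ih]
      ring

theorem filter_sum_le_matchCost {E : List (Pt d × Pt d)} (hnd : E.Nodup) :
    ((E.filter (fun e => decide (e ∈ M))).map (fun e => dist e.1 e.2)).sum ≤ matchCost M := by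
  classical
  set E' := E.filter (fun e => decide (e ∈ M)) with hE'
  have hnd' : E'.Nodup := List.Nodup.filter _ hnd
  have hsum : ∑ x ∈ E'.toFinset, dist x.1 x.2 = (E'.map (fun e => dist e.1 e.2)).sum :=
    list_sum_eq_finset_sum' hnd'
  rw [← hsum, matchCost]
  apply Finset.sum_le_sum_of_subset_of_nonneg
  · intro x hx
    have := List.mem_toFinset.1 hx
    rw [hE', List.mem_filter] at this
    simpa using this.2
  · intro e _ _
    exact dist_nonneg

end PiSide

end Aux

/-- let `0 < ε ≤ 1`, `ε̄ = ε/c1` with `c1 ≥ 8·c0`, `0 < ε̲ ≤ ε̄`, and suppose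
`cost(Mopt) ≤ 9·√d·n/ε`.  If `M` is a matching of size `i < n` with
`cost(M) ≤ (1 + ε/2)·cost(Mopt)` and every alternating cycle `Γ` satisfies
`adj_{ε̄,M}(Γ) ≥ 0`, then every augmenting path `Π` with `adj_{ε̲,M}(Π) ≤ adj*_{ε̄,M}`
satisfies `‖Π‖ ≤ 27·√d·n/ε`. -/
theorem stmt11 (d n i : ℕ) (hn : 1 ≤ n) (A B : Finset (Pt d)) (hAB : Disjoint A B)
    (hA : A.card = n) (hB : B.card = n)
    (ε c0 c1 εu εl : ℝ) (hε : 0 < ε) (hε1 : ε ≤ 1)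
    (hc0 : 0 < c0) (hc1 : 8 * c0 ≤ c1) (hεu : εu = ε / c1)
    (hεl : 0 < εl) (hεlu : εl ≤ εu)
    (M : Finset (Pt d × Pt d)) (hM : IsMatching A B M)
    (hMcard : M.card = i) (hin : i < n)
    (Mopt : Finset (Pt d × Pt d)) (hMopt : IsMatching A B Mopt) (hMoptcard : Mopt.card = n)
    (hMoptmin : ∀ M'' : Finset (Pt d × Pt d),
      IsMatching A B M'' → M''.card = n → matchCost Mopt ≤ matchCost M'')
    (hopt : matchCost Mopt ≤ 9 * Real.sqrt d * n / ε)
    (hMcost : matchCost M ≤ (1 + ε / 2) * matchCost Mopt)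
    (hcyc : ∀ L : List (Pt d), IsAltCycle A B M L → 0 ≤ adjCost c0 εu M (cycleEdges A L))
    (astar : ℝ) (hastar : IsLeast (adjSet c0 εu A B M) astar) :
    ∀ L : List (Pt d), IsAugPath A B M L →
      adjCost c0 εl M (pathEdges A L) ≤ astar →
      eucLen (pathEdges A L) ≤ 27 * Real.sqrt d * n / ε := by
  intro L hL hadjL
  have hG : Good A B M Mopt :=
    ⟨hAB, hM, hMopt, by rw [hA, hB], by rw [hMoptcard, hA]⟩
  have hcM0 : 0 ≤ matchCost M := matchCost_nonneg hG
  have hcOpt0 : 0 ≤ matchCost Mopt := matchCost_nonneg hG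
  -- Π side
  have hndL : L.Nodup := hL.1.2.1
  have hE := eucLen_eq_netCost_add (M := M) (E := pathEdges A L)
  have hfil := filter_sum_le_matchCost (M := M) (pathEdges_nodup (A := A) hndL)
  have hlen0 : 0 ≤ eucLen (pathEdges A L) := eucLen_nonneg
  have hnet_le : netCost M (pathEdges A L) ≤ astar := by
    have hd : adjCost c0 εl M (pathEdges A L) =
        netCost M (pathEdges A L) + c0 * εl * eucLen (pathEdges A L) := rfl
    nlinarith [mul_nonneg (mul_nonneg hc0.le hεl.le) hlen0]
  have hkey : eucLen (pathEdges A L) ≤ astar + 2 * matchCost M := by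
    rw [hE]
    linarith
  -- arithmetic on εu
  have hc1pos : (0:ℝ) < c1 := by linarith
  have hεupos : 0 < εu := by rw [hεu]; positivity
  have ht0 : 0 ≤ c0 * εu := by positivity
  have htε : c0 * εu ≤ ε / 8 := by
    rw [hεu]
    have hstep : ε / c1 ≤ ε / (8 * c0) := by
      rw [div_le_div_iff₀ hc1pos (by positivity)]
      nlinarith
    have heq : c0 * (ε / (8 * c0)) = ε / 8 := by
      field_simp
    calc c0 * (ε / c1) ≤ c0 * (ε / (8 * c0)) :=
          mul_le_mul_of_nonneg_left hstep hc0.le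
      _ = ε / 8 := heq
  have hsqrt : (0:ℝ) ≤ Real.sqrt d := Real.sqrt_nonneg _
  have hncast : (0:ℝ) ≤ (n:ℝ) := Nat.cast_nonneg n
  have hS0 : 0 ≤ 9 * Real.sqrt d * n / ε := by positivity
  have h27 : 27 * Real.sqrt d * (n:ℝ) / ε = 3 * (9 * Real.sqrt d * n / ε) := by ring
  rcases le_or_gt astar 0 with hneg | hpos
  · -- astar ≤ 0
    have h1 : eucLen (pathEdges A L) ≤ 2 * matchCost M := by linarith
    have h2 : 2 * matchCost M ≤ (2 + ε) * matchCost Mopt := by nlinarith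
    have h3 : (2 + ε) * matchCost Mopt ≤ 3 * matchCost Mopt := by nlinarith
    rw [h27]
    linarith
  · -- astar > 0 : use the decomposition
    have hfreeex : ∃ a ∈ A, ¬∃ e ∈ M, e.1 = a := by
      have hsub : M.image Prod.fst ⊆ A := by
        intro x hx
        rcases Finset.mem_image.1 hx with ⟨e, he, rfl⟩
        exact (hM.1 e he).1
      have hlt : (M.image Prod.fst).card < A.card := by
        have h1 : (M.image Prod.fst).card ≤ M.card := Finset.card_image_le
        rw [hA]
        omega
      have hne : (A \ M.image Prod.fst).Nonempty := by
        rw [← Finset.card_pos]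
        have := Finset.card_sdiff_of_subset hsub
        omega
      obtain ⟨a, ha⟩ := hne
      obtain ⟨haA, hanotin⟩ := Finset.mem_sdiff.1 ha
      refine ⟨a, haA, ?_⟩
      rintro ⟨e, he, rfl⟩
      exact hanotin (Finset.mem_image.2 ⟨e, he, rfl⟩)
    have hdec := (decomp hG c0 εu ht0 astar hpos.le
      (fun x hx => hastar.2 hx) hcyc A.card A le_rfl le_rfl
      (fun a _ a' h => hG.nxt_mem_A h) (fun a ha _ _ _ => ha)).2 hfreeex
    rw [sum_wF hG c0 εu] at hdec
    have h1 : eucLen (pathEdges A L) ≤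
        (1 + c0*εu) * (matchCost Mopt + matchCost M) := by nlinarith
    have h2 : matchCost Mopt + matchCost M ≤ (2 + ε/2) * matchCost Mopt := by linarith
    have h3 : (1 + c0*εu) * (matchCost Mopt + matchCost M) ≤
        (1 + c0*εu) * ((2 + ε/2) * matchCost Mopt) := by nlinarith
    have h4 : (1 + c0*εu) * ((2 + ε/2) * matchCost Mopt) ≤ 3 * matchCost Mopt := by
      nlinarith [mul_nonneg ht0 hcOpt0, mul_nonneg (mul_nonneg ht0 hε.le) hcOpt0,
        mul_nonneg hε.le hcOpt0, mul_nonneg (mul_nonneg hε.le hε.le) hcOpt0]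
    rw [h27]
    linarith
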